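/- Let Π be a finite projective plane and let F be a collineation group of Π. Then F is transitive on the points of Π if and only if F is transitive on the lines of Π. -/

import Mathlib

/-- A collineation of an incidence structure: a bijection of the points together with a
bijection of the lines which preserve the incidence relation. -/
@[ext]
structure Collineation (P L : Type*) [Membership P L] where
  pointMap : P ≃ P
  lineMap : L ≃ L
  mem_map : ∀ (p : P) (l : L), pointMap p ∈ lineMap l ↔ p ∈ l

namespace Collineation

variable {P L : Type*} [Membership P L]

/-- Collineations form a group under composition. -/
instance : Group (Collineation P L) where
  one := ⟨Equiv.refl P, Equiv.refl L, fun _ _ => Iff.rfl⟩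
  mul f g := ⟨g.pointMap.trans f.pointMap, g.lineMap.trans f.lineMap,
    fun p l => by simp only [Equiv.trans_apply, f.mem_map, g.mem_map]⟩
  inv f := ⟨f.pointMap.symm, f.lineMap.symm, fun p l => by
    conv_rhs => rw [← f.pointMap.apply_symm_apply p, ← f.lineMap.apply_symm_apply l]
    exact (f.mem_map _ _).symm⟩
  mul_assoc f g h := by ext x <;> rfl
  one_mul f := by ext x <;> rfl
  mul_one f := by ext x <;> rfl
  inv_mul_cancel f := by
    ext x
    · exact f.pointMap.symm_apply_apply x
    · exact f.lineMap.symm_apply_apply x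

end Collineation

open Finset in
/-- Generic double-counting lemma: given commuting permutation actions on `P` and `L`
preserving a relation `mem` with constant "column sums" `c` coprime to `|P|`,
transitivity on `P` implies transitivity on `L`. -/
private theorem key_trans {P L : Type*} [Fintype P] [Fintype L] [Nonempty P]
    (mem : P → L → Prop) [∀ p l, Decidable (mem p l)] {G : Type*} [Group G]
    (σ : G →* Equiv.Perm P) (τ : G →* Equiv.Perm L)
    (hmem : ∀ (g : G) (p : P) (l : L), mem (σ g p) (τ g l) ↔ mem p l)
    (c : ℕ) (hc : ∀ l : L, (univ.filter fun p => mem p l).card = c)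
    (hcop : Nat.Coprime (Fintype.card P) c)
    (hle : Fintype.card L ≤ Fintype.card P)
    (htrans : ∀ p q : P, ∃ g : G, σ g p = q) :
    ∀ l m : L, ∃ g : G, τ g l = m := by
  classical
  intro l m
  set S : Finset L := univ.filter (fun n => ∃ g : G, τ g l = n) with hS
  have hmemS : ∀ {n : L}, n ∈ S ↔ ∃ g : G, τ g l = n := by simp [hS]
  -- the orbit is preserved by every τ g
  have hclosed : ∀ (g : G) {n : L}, n ∈ S → τ g n ∈ S := by
    rintro g n hn
    obtain ⟨h, rfl⟩ := hmemS.mp hn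
    exact hmemS.mpr ⟨g * h, by simp [map_mul]⟩
  -- the number of lines of S through a point is independent of the point
  have hk : ∀ p q : P, (S.filter fun n => mem p n).card = (S.filter fun n => mem q n).card := by
    intro p q
    obtain ⟨g, rfl⟩ := htrans p q
    refine Finset.card_nbij' (fun n => τ g n) (fun n => τ g⁻¹ n) ?_ ?_ ?_ ?_
    · intro n hn
      rw [Finset.mem_coe, mem_filter] at hn ⊢
      exact ⟨hclosed g hn.1, (hmem g p n).mpr hn.2⟩
    · intro n hn
      rw [Finset.mem_coe, mem_filter] at hn ⊢
      refine ⟨hclosed g⁻¹ hn.1, ?_⟩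
      have h2 : τ g (τ g⁻¹ n) = n := by simp [map_inv]
      exact (h2 ▸ hmem g p (τ g⁻¹ n)).mp hn.2
    · intro n _; simp [map_inv]
    · intro n _; simp [map_inv]
  -- double counting
  obtain ⟨p₀⟩ := ‹Nonempty P›
  have count : S.card * c = Fintype.card P * (S.filter fun n => mem p₀ n).card := by
    have h1 : ∑ n ∈ S, (univ.filter fun p => mem p n).card = S.card * c := by
      rw [Finset.sum_congr rfl fun n _ => hc n, Finset.sum_const, smul_eq_mul]
    have h2 : ∑ p : P, (S.filter fun n => mem p n).card
        = Fintype.card P * (S.filter fun n => mem p₀ n).card := by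
      rw [Finset.sum_congr rfl fun p _ => hk p p₀, Finset.sum_const, card_univ, smul_eq_mul]
    have h3 : ∑ n ∈ S, (univ.filter fun p => mem p n).card
        = ∑ p : P, (S.filter fun n => mem p n).card := by
      simp_rw [Finset.card_filter]
      exact Finset.sum_comm
    rw [← h1, h3, h2]
  have hdvd : Fintype.card P ∣ S.card :=
    hcop.dvd_of_dvd_mul_right ⟨_, count⟩
  have hne : l ∈ S := hmemS.mpr ⟨1, by simp⟩
  have hpos : 0 < S.card := Finset.card_pos.mpr ⟨l, hne⟩
  have hge : Fintype.card P ≤ S.card := Nat.le_of_dvd hpos hdvd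
  have hSuniv : S = univ := by
    apply Finset.eq_univ_of_card
    have : S.card ≤ Fintype.card L := by simpa [card_univ] using Finset.card_le_card S.subset_univ
    omega
  exact hmemS.mp (hSuniv ▸ Finset.mem_univ m)

/-- For a collineation group `F` of a finite projective plane,
`F` is transitive on points if and only if `F` is transitive on lines. -/
theorem point_transitive_iff_line_transitive
    (P L : Type*) [Membership P L] [Finite P] [Finite L]
    [Configuration.ProjectivePlane P L]
    (F : Subgroup (Collineation P L)) :
    (∀ p q : P, ∃ f ∈ F, f.pointMap p = q) ↔ (∀ l m : L, ∃ f ∈ F, f.lineMap l = m) := by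
  classical
  cases nonempty_fintype P
  cases nonempty_fintype L
  obtain ⟨p₁, p₂, p₃, l₁, l₂, l₃, -⟩ := @Configuration.ProjectivePlane.exists_config P L _ _
  have hP : Nonempty P := ⟨p₁⟩
  have hL : Nonempty L := ⟨l₁⟩
  set n := Configuration.ProjectivePlane.order P L with hn
  have hcardP : Fintype.card P = n ^ 2 + n + 1 := Configuration.ProjectivePlane.card_points P L
  have hcardL : Fintype.card L = n ^ 2 + n + 1 := Configuration.ProjectivePlane.card_lines P L
  have hcop : Nat.Coprime (n ^ 2 + n + 1) (n + 1) := by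
    have : n ^ 2 + n + 1 = 1 + (n + 1) * n := by ring
    rw [this]
    exact (Nat.coprime_add_mul_left_left 1 (n + 1) n).mpr (Nat.coprime_one_left _)
  -- the monoid homs
  let σ : F →* Equiv.Perm P :=
    { toFun := fun f => (f : Collineation P L).pointMap
      map_one' := rfl
      map_mul' := fun f g => rfl }
  let τ : F →* Equiv.Perm L :=
    { toFun := fun f => (f : Collineation P L).lineMap
      map_one' := rfl
      map_mul' := fun f g => rfl }
  have hσ : ∀ (g : F) (p : P) (l : L), (σ g p ∈ τ g l) ↔ p ∈ l :=
    fun g p l => (g : Collineation P L).mem_map p l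
  have hcP : ∀ l : L, (Finset.univ.filter fun p : P => p ∈ l).card = n + 1 := by
    intro l
    have := Configuration.ProjectivePlane.pointCount_eq P l
    rwa [Configuration.pointCount, Nat.card_eq_fintype_card, Fintype.card_subtype] at this
  have hcL : ∀ p : P, (Finset.univ.filter fun l : L => p ∈ l).card = n + 1 := by
    intro p
    have := Configuration.ProjectivePlane.lineCount_eq L p
    rwa [Configuration.lineCount, Nat.card_eq_fintype_card, Fintype.card_subtype] at this
  constructor
  · intro htrans l m
    have := key_trans (fun (p : P) (l : L) => p ∈ l) σ τ hσ (n + 1) hcP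
      (by rw [hcardP]; exact hcop) (by omega)
      (fun p q => by obtain ⟨f, hf, h⟩ := htrans p q; exact ⟨⟨f, hf⟩, h⟩) l m
    obtain ⟨g, hg⟩ := this
    exact ⟨g, g.2, hg⟩
  · intro htrans p q
    have := key_trans (fun (l : L) (p : P) => p ∈ l) τ σ (fun g l p => hσ g p l) (n + 1) hcL
      (by rw [hcardL]; exact hcop) (by omega)
      (fun l m => by obtain ⟨f, hf, h⟩ := htrans l m; exact ⟨⟨f, hf⟩, h⟩) p q
    obtain ⟨g, hg⟩ := this
    exact ⟨g, g.2, hg⟩
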